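/- The Pfaffian of the 2μ×2μ skew-symmetric 'checkerboard' matrix A with entries A_{ij} = sign(j−i) when j−i is odd and A_{ij} = 0 when j−i is even equals 2^{μ−1} for every μ ≥ 1. -/

import Mathlib

open MvPolynomial

/-- Permutations giving a canonical perfect matching: σ(2i) < σ(2i+1) and σ(2i) increasing. -/
def pfPerms (μ : ℕ) : Finset (Equiv.Perm (Fin (2*μ))) :=
  Finset.univ.filter fun σ =>
    (∀ i : Fin μ, σ ⟨2*i.1, by have := i.2; omega⟩ < σ ⟨2*i.1+1, by have := i.2; omega⟩) ∧
    (∀ i j : Fin μ, i < j →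
      σ ⟨2*i.1, by have := i.2; omega⟩ < σ ⟨2*j.1, by have := j.2; omega⟩)


/-- The Pfaffian of a `2μ × 2μ` matrix (intended for skew-symmetric matrices). -/
def pfaffian {R : Type*} [CommRing R] {μ : ℕ} (A : Matrix (Fin (2*μ)) (Fin (2*μ)) R) : R :=
  ∑ σ ∈ pfPerms μ, (Equiv.Perm.sign σ : ℤ) •
    ∏ i : Fin μ, A (σ ⟨2*i.1, by have := i.2; omega⟩) (σ ⟨2*i.1+1, by have := i.2; omega⟩)


/-- The `2μ × 2μ` checkerboard matrix: entry `sign (j−i)` when `j−i` is odd, `0` when `j−i`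
is even. -/
def checkerboard (μ : ℕ) : Matrix (Fin (2*μ)) (Fin (2*μ)) ℤ :=
  fun i j => if Odd (i.1 + j.1) then (if i.1 < j.1 then 1 else -1) else 0

namespace PfCb

variable {μ : ℕ}

def lo (i : Fin μ) : Fin (2*μ) := ⟨2*i.1, by have := i.2; omega⟩
def hi' (i : Fin μ) : Fin (2*μ) := ⟨2*i.1+1, by have := i.2; omega⟩

def Bmat (μ : ℕ) : Matrix (Fin μ) (Fin μ) ℤ := fun i j => if i ≤ j then 1 else -1

lemma pfaffian_eq {R : Type*} [CommRing R] (A : Matrix (Fin (2*μ)) (Fin (2*μ)) R) :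
    pfaffian A = ∑ σ ∈ pfPerms μ, (Equiv.Perm.sign σ : ℤ) •
      ∏ i : Fin μ, A (σ (lo i)) (σ (hi' i)) := rfl

lemma mem_pfPerms {σ : Equiv.Perm (Fin (2*μ))} :
    σ ∈ pfPerms μ ↔ (∀ i : Fin μ, σ (lo i) < σ (hi' i)) ∧
      (∀ i j : Fin μ, i < j → σ (lo i) < σ (lo j)) := by
  simp only [pfPerms, Finset.mem_filter, Finset.mem_univ, true_and]
  rfl

lemma cb_lo_hi (a b : Fin μ) : checkerboard μ (lo a) (hi' b) = Bmat μ a b := by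
  simp only [checkerboard, lo, hi', Bmat]
  show (if Odd (2 * a.1 + (2 * b.1 + 1)) then (if 2 * a.1 < 2 * b.1 + 1 then (1 : ℤ) else -1)
      else 0) = if a ≤ b then 1 else -1
  rw [if_pos (show Odd (2 * a.1 + (2 * b.1 + 1)) from ⟨a.1 + b.1, by omega⟩)]
  rcases le_or_gt a b with h | h
  · rw [if_pos (by omega : 2*a.1 < 2*b.1+1), if_pos h]
  · rw [if_neg (by have := Fin.lt_def.mp h; omega : ¬ 2*a.1 < 2*b.1+1), if_neg (not_le.mpr h)]

lemma cb_hi_lo (a b : Fin μ) : checkerboard μ (hi' b) (lo a) = -(Bmat μ a b) := by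
  simp only [checkerboard, lo, hi', Bmat]
  show (if Odd (2 * b.1 + 1 + 2 * a.1) then (if 2 * b.1 + 1 < 2 * a.1 then (1 : ℤ) else -1)
      else 0) = -(if a ≤ b then 1 else -1)
  rw [if_pos (show Odd (2 * b.1 + 1 + 2 * a.1) from ⟨a.1 + b.1, by omega⟩)]
  rcases le_or_gt a b with h | h
  · rw [if_neg (by have := Fin.le_def.mp h; omega : ¬ 2*b.1+1 < 2*a.1), if_pos h]
  · rw [if_pos (by have := Fin.lt_def.mp h; omega : 2*b.1+1 < 2*a.1), if_neg (not_le.mpr h),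
      neg_neg]

lemma cb_same_parity {x y : Fin (2*μ)} (h : x.1 % 2 = y.1 % 2) : checkerboard μ x y = 0 := by
  simp only [checkerboard]
  rw [if_neg]
  rw [Nat.odd_iff]
  omega

def eE (μ : ℕ) : Fin μ × Fin 2 ≃ Fin (2*μ) :=
  finProdFinEquiv.trans (finCongr (Nat.mul_comm μ 2))

lemma eE_apply (i : Fin μ) (r : Fin 2) : eE μ (i, r) = ⟨r.1 + 2*i.1, by omega⟩ := by
  simp only [eE, Equiv.trans_apply, finProdFinEquiv_apply_val, finCongr_apply]
  ext
  simp

lemma eE_lo (i : Fin μ) : eE μ (i, 0) = lo i := by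
  rw [eE_apply]; ext; simp [lo]

lemma eE_hi (i : Fin μ) : eE μ (i, 1) = hi' i := by
  rw [eE_apply]; ext; simp [hi']; omega

/-- The permutation built from parities `ε` and the even/odd permutations `α`, `β`. -/
def Phi (ε : Fin μ → Bool) (α β : Equiv.Perm (Fin μ)) : Equiv.Perm (Fin (2*μ)) :=
  (eE μ).permCongr
    ((Equiv.prodCongrLeft (fun r : Fin 2 => if r = 0 then α else β)) *
     (Equiv.prodCongrRight (fun i : Fin μ => if ε i then Equiv.swap (0 : Fin 2) 1 else 1)))

lemma Phi_lo (ε : Fin μ → Bool) (α β : Equiv.Perm (Fin μ)) (i : Fin μ) :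
    Phi ε α β (lo i) = if ε i then hi' (β i) else lo (α i) := by
  rw [Phi, Equiv.permCongr_apply, ← eE_lo, Equiv.symm_apply_apply, Equiv.Perm.mul_apply]
  by_cases h : ε i
  · simp [h, eE_hi, Equiv.swap_apply_left]
  · simp [h, eE_lo]

lemma Phi_hi (ε : Fin μ → Bool) (α β : Equiv.Perm (Fin μ)) (i : Fin μ) :
    Phi ε α β (hi' i) = if ε i then lo (α i) else hi' (β i) := by
  rw [Phi, Equiv.permCongr_apply, ← eE_hi, Equiv.symm_apply_apply, Equiv.Perm.mul_apply]
  by_cases h : ε i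
  · simp [h, eE_lo, Equiv.swap_apply_right]
  · simp [h, eE_hi]

lemma sign_Phi (ε : Fin μ → Bool) (α β : Equiv.Perm (Fin μ)) :
    Equiv.Perm.sign (Phi ε α β) =
      Equiv.Perm.sign α * Equiv.Perm.sign β * ∏ i : Fin μ, (if ε i then (-1 : ℤˣ) else 1) := by
  rw [Phi, Equiv.Perm.sign_permCongr, Equiv.Perm.sign_mul,
    Equiv.Perm.sign_prodCongrLeft, Equiv.Perm.sign_prodCongrRight]
  congr 1
  · rw [Fin.prod_univ_two]
    norm_num
  · apply Finset.prod_congr rfl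
    intro i _
    by_cases h : ε i <;> simp [h, Equiv.Perm.sign_swap]

def Fmat (μ : ℕ) : Matrix (Fin μ) (Fin μ) ℤ :=
  fun k l => if k = l then 1 else if k.1 + 1 = l.1 then -1 else 0

lemma Fmat_det : (Fmat μ).det = 1 := by
  rw [Matrix.det_of_upperTriangular (M := Fmat μ)]
  · simp [Fmat]
  · intro i j h
    simp only [id] at h
    have h1 : ¬ (i = j) := by intro e; subst e; exact lt_irrefl _ h
    have h2 : ¬ (i.1 + 1 = j.1) := by have := Fin.lt_def.mp h; omega
    simp [Fmat, h1, h2]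

lemma BF_entry (k l : Fin μ) :
    (Bmat μ * Fmat μ) k l = Bmat μ k l +
      (if h : 0 < l.1 then -(Bmat μ k ⟨l.1 - 1, by omega⟩) else 0) := by
  have hsplit : ∀ m : Fin μ, Fmat μ m l =
      (if m = l then 1 else 0) + (if m.1 + 1 = l.1 then -1 else 0) := by
    intro m
    by_cases h1 : m = l
    · subst h1
      simp [Fmat, show ¬ (m.1 + 1 = m.1) by omega]
    · have h1' : ¬ m.1 = l.1 := fun hc => h1 (Fin.ext hc)
      by_cases h2 : m.1 + 1 = l.1 <;> simp [Fmat, h1, h2]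
  rw [Matrix.mul_apply]
  simp_rw [hsplit, mul_add]
  rw [Finset.sum_add_distrib]
  congr 1
  · simp [mul_ite]
  · by_cases h : 0 < l.1
    · rw [dif_pos h, Finset.sum_eq_single (⟨l.1 - 1, by omega⟩ : Fin μ)]
      · simp [show (⟨l.1-1, by omega⟩ : Fin μ).1 + 1 = l.1 by simp; omega]
      · intro m _ hm
        rw [if_neg, mul_zero]
        intro hc
        exact hm (by ext; simp; omega)
      · simp
    · rw [dif_neg h]
      apply Finset.sum_eq_zero
      intro m _
      rw [if_neg (by omega), mul_zero]

lemma Bmat_det (h : 1 ≤ μ) : (Bmat μ).det = 2 ^ (μ - 1) := by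
  have hF := Fmat_det (μ := μ)
  have key : (Bmat μ * Fmat μ).det = 2 ^ (μ - 1) := by
    rw [Matrix.det_of_lowerTriangular]
    · obtain ⟨ν, rfl⟩ : ∃ ν, μ = ν + 1 := ⟨μ - 1, by omega⟩
      have hdiag : ∀ k : Fin (ν+1), (Bmat (ν+1) * Fmat (ν+1)) k k =
          if k.1 = 0 then 1 else 2 := by
        intro k
        rw [BF_entry]
        by_cases hk : 0 < k.1
        · rw [dif_pos hk, if_neg (by omega)]
          have h1 : Bmat (ν+1) k k = 1 := by simp [Bmat]
          have h2 : Bmat (ν+1) k ⟨k.1-1, by omega⟩ = -1 := by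
            rw [Bmat, if_neg]
            rw [Fin.le_def]
            show ¬ k.1 ≤ k.1 - 1
            omega
          rw [h1, h2]; norm_num
        · rw [dif_neg hk, if_pos (by omega)]
          simp [Bmat]
      simp_rw [hdiag]
      rw [Fin.prod_univ_succ]
      simp [Fin.val_succ]
    · intro i j hij
      have hij' : i < j := hij
      have hv := Fin.lt_def.mp hij'
      rw [BF_entry]
      have h1 : Bmat μ i j = 1 := by rw [Bmat, if_pos (le_of_lt hij')]
      rw [dif_pos (by omega : 0 < j.1), h1]
      have h2 : Bmat μ i ⟨j.1-1, by omega⟩ = 1 := by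
        rw [Bmat, if_pos]
        rw [Fin.le_def]
        exact Nat.le_sub_one_of_lt hv
      rw [h2]; norm_num
  rw [← key, Matrix.det_mul, hF, mul_one]


lemma lo_or_hi (x : Fin (2*μ)) : ∃ i : Fin μ, x = lo i ∨ x = hi' i := by
  refine ⟨⟨x.1/2, by omega⟩, ?_⟩
  rcases Nat.even_or_odd x.1 with h | h
  · rw [Nat.even_iff] at h
    left; ext; simp only [lo]; omega
  · rw [Nat.odd_iff] at h
    right; ext; simp only [hi']; omega

/-- the minimum of the pair `{2j, 2 π j + 1}`. -/
def Mfun (π : Equiv.Perm (Fin μ)) : Fin μ → ℕ := fun j => min (2*j.1) (2*(π j).1 + 1)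

lemma Mfun_cases (π : Equiv.Perm (Fin μ)) (j : Fin μ) :
    Mfun π j = 2*j.1 ∨ Mfun π j = 2*(π j).1 + 1 := min_choice _ _

lemma Mfun_inj (π : Equiv.Perm (Fin μ)) : Function.Injective (Mfun π) := by
  intro a b h
  rcases Mfun_cases π a with ha | ha <;> rcases Mfun_cases π b with hb | hb <;>
    rw [ha, hb] at h
  · exact Fin.ext (by omega)
  · omega
  · omega
  · exact π.injective (Fin.ext (by omega))

def sortα (π : Equiv.Perm (Fin μ)) : Equiv.Perm (Fin μ) := Tuple.sort (Mfun π)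

/-- The canonical element of `pfPerms` associated to `π`. -/
def Fmap (π : Equiv.Perm (Fin μ)) : Equiv.Perm (Fin (2*μ)) :=
  Phi (fun i => decide (π (sortα π i) < sortα π i)) (sortα π) ((sortα π).trans π)

lemma Fmap_lo (π : Equiv.Perm (Fin μ)) (i : Fin μ) :
    Fmap π (lo i) =
      if π (sortα π i) < sortα π i then hi' (π (sortα π i)) else lo (sortα π i) := by
  rw [Fmap, Phi_lo]
  by_cases c : π (sortα π i) < sortα π i <;> simp [c, Equiv.trans_apply]

lemma Fmap_hi (π : Equiv.Perm (Fin μ)) (i : Fin μ) :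
    Fmap π (hi' i) =
      if π (sortα π i) < sortα π i then lo (sortα π i) else hi' (π (sortα π i)) := by
  rw [Fmap, Phi_hi]
  by_cases c : π (sortα π i) < sortα π i <;> simp [c, Equiv.trans_apply]

lemma Fmap_lo_val (π : Equiv.Perm (Fin μ)) (i : Fin μ) :
    (Fmap π (lo i)).1 = Mfun π (sortα π i) := by
  rw [Fmap_lo, Mfun]
  by_cases c : π (sortα π i) < sortα π i
  · rw [if_pos c, min_eq_right (by have := Fin.lt_def.mp c; omega)]
    rfl
  · rw [if_neg c, min_eq_left (by have := Fin.le_def.mp (not_lt.mp c); omega)]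
    rfl

lemma Fmap_strictMono (π : Equiv.Perm (Fin μ)) :
    StrictMono (fun i => Mfun π (sortα π i)) := by
  have hmono : Monotone (Mfun π ∘ (sortα π)) := Tuple.monotone_sort (Mfun π)
  exact hmono.strictMono_of_injective ((Mfun_inj π).comp (sortα π).injective)

lemma Fmap_mem (π : Equiv.Perm (Fin μ)) :
    Fmap π ∈ pfPerms μ ∧
      ∀ i : Fin μ, ¬ ((Fmap π (lo i)).1 % 2 = (Fmap π (hi' i)).1 % 2) := by
  refine ⟨mem_pfPerms.mpr ⟨?_, ?_⟩, ?_⟩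
  · intro i
    rw [Fmap_lo, Fmap_hi]
    by_cases c : π (sortα π i) < sortα π i
    · rw [if_pos c, if_pos c, Fin.lt_def]
      have := Fin.lt_def.mp c
      simp only [lo, hi']
      omega
    · rw [if_neg c, if_neg c, Fin.lt_def]
      have := Fin.le_def.mp (not_lt.mp c)
      simp only [lo, hi']
      omega
  · intro i j hij
    rw [Fin.lt_def, Fmap_lo_val, Fmap_lo_val]
    exact Fmap_strictMono π hij
  · intro i
    rw [Fmap_lo, Fmap_hi]
    by_cases c : π (sortα π i) < sortα π i <;>
      simp only [c, if_true, if_false, lo, hi'] <;> omega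

lemma Fmap_value (π : Equiv.Perm (Fin μ)) :
    (Equiv.Perm.sign π : ℤ) • ∏ j : Fin μ, Bmat μ j (π j) =
      (Equiv.Perm.sign (Fmap π) : ℤ) •
        ∏ i : Fin μ, checkerboard μ (Fmap π (lo i)) (Fmap π (hi' i)) := by
  set α := sortα π with hα
  set ε : Fin μ → Bool := fun i => decide (π (sortα π i) < sortα π i) with hε
  set u : ℤ := ∏ i : Fin μ, (if π (α i) < α i then (-1 : ℤ) else 1) with hu
  have hu2 : u * u = 1 := by
    rw [hu, ← Finset.prod_mul_distrib]
    apply Finset.prod_eq_one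
    intro i _
    by_cases c : π (α i) < α i <;> simp [c]
  have hsign : (Equiv.Perm.sign (Fmap π) : ℤ) =
      (Equiv.Perm.sign α : ℤ) * (Equiv.Perm.sign ((α).trans π) : ℤ) * u := by
    rw [Fmap, sign_Phi]
    push_cast [Units.coe_prod]
    congr 1
    rw [hu]
    apply Finset.prod_congr rfl
    intro i _
    by_cases c : π (α i) < α i
    · rw [if_pos c, if_pos (by simpa [hα] using c)]
      simp
    · rw [if_neg c, if_neg (by simpa [hα] using c)]
      simp
  have hprod : ∏ i : Fin μ, checkerboard μ (Fmap π (lo i)) (Fmap π (hi' i)) =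
      u * ∏ i : Fin μ, Bmat μ (α i) (π (α i)) := by
    rw [hu, ← Finset.prod_mul_distrib]
    apply Finset.prod_congr rfl
    intro i _
    rw [Fmap_lo, Fmap_hi]
    by_cases c : π (α i) < α i
    · rw [if_pos (by simpa [hα] using c), if_pos (by simpa [hα] using c), if_pos c]
      rw [hα] at *
      rw [cb_hi_lo]
      ring
    · rw [if_neg (by simpa [hα] using c), if_neg (by simpa [hα] using c), if_neg c]
      rw [hα] at *
      rw [cb_lo_hi]
      ring
  have hB : ∏ i : Fin μ, Bmat μ (α i) (π (α i)) = ∏ j : Fin μ, Bmat μ j (π j) :=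
    Equiv.prod_comp α (fun j => Bmat μ j (π j))
  have hsigntrans : (Equiv.Perm.sign (α.trans π) : ℤ) =
      (Equiv.Perm.sign π : ℤ) * (Equiv.Perm.sign α : ℤ) := by
    have : α.trans π = π * α := rfl
    rw [this, Equiv.Perm.sign_mul]
    push_cast
    ring
  have hsa : (Equiv.Perm.sign α : ℤ) * (Equiv.Perm.sign α : ℤ) = 1 := by
    rw [← Units.val_mul, Int.units_mul_self, Units.val_one]
  rw [hsign, hprod, hB, hsigntrans, smul_eq_mul, smul_eq_mul]
  have key : ∀ sa sp q : ℤ, sa * sa = 1 → u * u = 1 →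
      (sa * (sp * sa) * u) * (u * q) = sp * q := by
    intro sa sp q h1 h2
    have : (sa * (sp * sa) * u) * (u * q) = (sa * sa) * (u * u) * (sp * q) := by ring
    rw [this, h1, h2, one_mul, one_mul]
  exact (key _ _ _ hsa hu2).symm


lemma Fmap_inj : Function.Injective (Fmap (μ := μ)) := by
  intro p1 p2 heq
  have hagree : ∀ i : Fin μ, sortα p1 i = sortα p2 i ∧
      p1 (sortα p1 i) = p2 (sortα p2 i) := by
    intro i
    have h1 : Fmap p1 (lo i) = Fmap p2 (lo i) := by rw [heq]
    have h2 : Fmap p1 (hi' i) = Fmap p2 (hi' i) := by rw [heq]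
    rw [Fmap_lo, Fmap_lo] at h1
    rw [Fmap_hi, Fmap_hi] at h2
    by_cases c1 : p1 (sortα p1 i) < sortα p1 i <;>
      by_cases c2 : p2 (sortα p2 i) < sortα p2 i <;>
        simp only [c1, c2, if_true, if_false] at h1 h2
    · have e1 := congrArg Fin.val h1
      have e2 := congrArg Fin.val h2
      simp only [lo, hi'] at e1 e2
      exact ⟨Fin.ext (by omega), Fin.ext (by omega)⟩
    · exfalso
      have := congrArg Fin.val h1
      simp only [lo, hi'] at this
      omega
    · exfalso
      have := congrArg Fin.val h1
      simp only [lo, hi'] at this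
      omega
    · have e1 := congrArg Fin.val h1
      have e2 := congrArg Fin.val h2
      simp only [lo, hi'] at e1 e2
      exact ⟨Fin.ext (by omega), Fin.ext (by omega)⟩
  have hs : sortα p1 = sortα p2 := Equiv.ext fun i => (hagree i).1
  apply Equiv.ext
  intro j
  have hval := (hagree ((sortα p1).symm j)).2
  rw [Equiv.apply_symm_apply] at hval
  have hj : sortα p2 ((sortα p1).symm j) = j := by
    rw [← hs]
    exact Equiv.apply_symm_apply _ j
  rw [hj] at hval
  exact hval

def evF (σ : Equiv.Perm (Fin (2*μ))) : Fin μ → Fin μ := fun i =>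
  ⟨(if (σ (lo i)).1 % 2 = 0 then (σ (lo i)).1 else (σ (hi' i)).1)/2, by
    have := (σ (lo i)).2
    have := (σ (hi' i)).2
    split_ifs <;> omega⟩

def odF (σ : Equiv.Perm (Fin (2*μ))) : Fin μ → Fin μ := fun i =>
  ⟨(if (σ (lo i)).1 % 2 = 0 then (σ (hi' i)).1 else (σ (lo i)).1)/2, by
    have := (σ (lo i)).2
    have := (σ (hi' i)).2
    split_ifs <;> omega⟩

lemma evF_val (σ : Equiv.Perm (Fin (2*μ))) (i : Fin μ)
    (hm : ¬ ((σ (lo i)).1 % 2 = (σ (hi' i)).1 % 2)) :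
    2 * (evF σ i).1 = if (σ (lo i)).1 % 2 = 0 then (σ (lo i)).1 else (σ (hi' i)).1 := by
  show 2 * ((if (σ (lo i)).1 % 2 = 0 then (σ (lo i)).1 else (σ (hi' i)).1)/2) = _
  split_ifs with h <;> omega

lemma odF_val (σ : Equiv.Perm (Fin (2*μ))) (i : Fin μ)
    (hm : ¬ ((σ (lo i)).1 % 2 = (σ (hi' i)).1 % 2)) :
    2 * (odF σ i).1 + 1 = if (σ (lo i)).1 % 2 = 0 then (σ (hi' i)).1 else (σ (lo i)).1 := by
  show 2 * ((if (σ (lo i)).1 % 2 = 0 then (σ (hi' i)).1 else (σ (lo i)).1)/2) + 1 = _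
  split_ifs with h <;> omega

lemma Fmap_surj (σ : Equiv.Perm (Fin (2*μ))) (hmem : σ ∈ pfPerms μ)
    (hmix : ∀ i : Fin μ, ¬ ((σ (lo i)).1 % 2 = (σ (hi' i)).1 % 2)) :
    ∃ π : Equiv.Perm (Fin μ), Fmap π = σ := by
  obtain ⟨h1, h2⟩ := mem_pfPerms.mp hmem
  have hab : ∀ i : Fin μ, (σ (lo i)).1 < (σ (hi' i)).1 := fun i => Fin.lt_def.mp (h1 i)
  -- injectivity of the even- and odd-member maps
  have hev_inj : Function.Injective (evF σ) := by
    intro i j hij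
    have hvv : 2 * (evF σ i).1 = 2 * (evF σ j).1 := by rw [hij]
    rw [evF_val σ i (hmix i), evF_val σ j (hmix j)] at hvv
    by_cases ci : (σ (lo i)).1 % 2 = 0 <;> by_cases cj : (σ (lo j)).1 % 2 = 0 <;>
      simp only [ci, cj, if_true, if_false] at hvv
    · have := σ.injective (Fin.ext hvv : σ (lo i) = σ (lo j))
      have := congrArg Fin.val this
      simp only [lo] at this
      exact Fin.ext (by omega)
    · have := σ.injective (Fin.ext hvv : σ (lo i) = σ (hi' j))
      have := congrArg Fin.val this
      simp only [lo, hi'] at this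
      omega
    · have := σ.injective (Fin.ext hvv : σ (hi' i) = σ (lo j))
      have := congrArg Fin.val this
      simp only [lo, hi'] at this
      omega
    · have := σ.injective (Fin.ext hvv : σ (hi' i) = σ (hi' j))
      have := congrArg Fin.val this
      simp only [hi'] at this
      exact Fin.ext (by omega)
  have hod_inj : Function.Injective (odF σ) := by
    intro i j hij
    have hvv : 2 * (odF σ i).1 + 1 = 2 * (odF σ j).1 + 1 := by rw [hij]
    rw [odF_val σ i (hmix i), odF_val σ j (hmix j)] at hvv
    by_cases ci : (σ (lo i)).1 % 2 = 0 <;> by_cases cj : (σ (lo j)).1 % 2 = 0 <;>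
      simp only [ci, cj, if_true, if_false] at hvv
    · have := σ.injective (Fin.ext hvv : σ (hi' i) = σ (hi' j))
      have := congrArg Fin.val this
      simp only [hi'] at this
      exact Fin.ext (by omega)
    · have := σ.injective (Fin.ext hvv : σ (hi' i) = σ (lo j))
      have := congrArg Fin.val this
      simp only [lo, hi'] at this
      omega
    · have := σ.injective (Fin.ext hvv : σ (lo i) = σ (hi' j))
      have := congrArg Fin.val this
      simp only [lo, hi'] at this
      omega
    · have := σ.injective (Fin.ext hvv : σ (lo i) = σ (lo j))
      have := congrArg Fin.val this
      simp only [lo] at this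
      exact Fin.ext (by omega)
  set α : Equiv.Perm (Fin μ) :=
    Equiv.ofBijective (evF σ) (Finite.injective_iff_bijective.mp hev_inj) with hαdef
  set β : Equiv.Perm (Fin μ) :=
    Equiv.ofBijective (odF σ) (Finite.injective_iff_bijective.mp hod_inj) with hβdef
  set π : Equiv.Perm (Fin μ) := α.symm.trans β with hπdef
  have hπα : ∀ i, π (α i) = β i := by
    intro i
    rw [hπdef]
    simp [Equiv.trans_apply]
  have hαv : ∀ i, (α i).1 = (evF σ i).1 := fun i => rfl
  have hβv : ∀ i, (β i).1 = (odF σ i).1 := fun i => rfl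
  have hM : ∀ i, Mfun π (α i) = (σ (lo i)).1 := by
    intro i
    have h2a : 2 * (α i).1 = if (σ (lo i)).1 % 2 = 0 then (σ (lo i)).1 else (σ (hi' i)).1 := by
      rw [hαv]; exact evF_val σ i (hmix i)
    have h2b : 2 * (π (α i)).1 + 1 =
        if (σ (lo i)).1 % 2 = 0 then (σ (hi' i)).1 else (σ (lo i)).1 := by
      rw [hπα, hβv]; exact odF_val σ i (hmix i)
    show min (2*(α i).1) (2*(π (α i)).1 + 1) = (σ (lo i)).1
    by_cases c : (σ (lo i)).1 % 2 = 0
    · rw [if_pos c] at h2a h2b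
      rw [h2a, h2b]
      exact min_eq_left (le_of_lt (hab i))
    · rw [if_neg c] at h2a h2b
      rw [h2a, h2b]
      exact min_eq_right (le_of_lt (hab i))
  have hsort : α = Tuple.sort (Mfun π) := by
    rw [Tuple.eq_sort_iff]
    constructor
    · intro i j hij
      show Mfun π (α i) ≤ Mfun π (α j)
      rw [hM, hM]
      rcases eq_or_lt_of_le hij with rfl | h
      · exact le_refl _
      · exact le_of_lt (Fin.lt_def.mp (h2 i j h))
    · intro i j hij hMij
      exfalso
      have hMij' : Mfun π (α i) = Mfun π (α j) := hMij
      rw [hM, hM] at hMij'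
      have := Fin.lt_def.mp (h2 i j hij)
      omega
  have hsα : sortα π = α := by rw [sortα, ← hsort]
  refine ⟨π, ?_⟩
  apply Equiv.ext
  intro x
  obtain ⟨q, hq | hq⟩ := lo_or_hi x <;> subst hq
  · rw [Fmap_lo, hsα, hπα]
    have h2a := evF_val σ q (hmix q)
    have h2b := odF_val σ q (hmix q)
    rw [← hαv] at h2a
    rw [← hβv] at h2b
    by_cases c : (σ (lo q)).1 % 2 = 0
    · rw [if_pos c] at h2a h2b
      rw [if_neg (by rw [Fin.lt_def]; have := hab q; omega)]
      ext
      simp only [lo, hi'] at h2a h2b ⊢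
      omega
    · rw [if_neg c] at h2a h2b
      rw [if_pos (by rw [Fin.lt_def]; have := hab q; omega)]
      ext
      simp only [lo, hi'] at h2a h2b ⊢
      omega
  · rw [Fmap_hi, hsα, hπα]
    have h2a := evF_val σ q (hmix q)
    have h2b := odF_val σ q (hmix q)
    rw [← hαv] at h2a
    rw [← hβv] at h2b
    by_cases c : (σ (lo q)).1 % 2 = 0
    · rw [if_pos c] at h2a h2b
      rw [if_neg (by rw [Fin.lt_def]; have := hab q; omega)]
      ext
      simp only [lo, hi'] at h2a h2b ⊢
      omega
    · rw [if_neg c] at h2a h2b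
      rw [if_pos (by rw [Fin.lt_def]; have := hab q; omega)]
      ext
      simp only [lo, hi'] at h2a h2b ⊢
      omega


theorem pf_eq_det : pfaffian (checkerboard μ) = (Bmat μ).det := by
  classical
  rw [pfaffian_eq]
  have hrestrict :
      ∑ σ ∈ (pfPerms μ).filter
          (fun σ => ∀ i : Fin μ, ¬ ((σ (lo i)).1 % 2 = (σ (hi' i)).1 % 2)),
        ((Equiv.Perm.sign σ : ℤ) • ∏ i : Fin μ, checkerboard μ (σ (lo i)) (σ (hi' i))) =
      ∑ σ ∈ pfPerms μ,
        ((Equiv.Perm.sign σ : ℤ) • ∏ i : Fin μ, checkerboard μ (σ (lo i)) (σ (hi' i))) := by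
    apply Finset.sum_filter_of_ne
    intro σ _ hT i hpar
    apply hT
    rw [Finset.prod_eq_zero (Finset.mem_univ i) (cb_same_parity hpar), smul_zero]
  have hdet : (Bmat μ).det =
      ∑ π : Equiv.Perm (Fin μ),
        ((Equiv.Perm.sign π : ℤ) • ∏ j : Fin μ, Bmat μ j (π j)) := by
    rw [← Matrix.det_transpose, Matrix.det_apply]
    apply Finset.sum_congr rfl
    intro π _
    rw [Units.smul_def, smul_eq_mul]
    rfl
  rw [hdet, ← hrestrict]
  refine (Finset.sum_bij (fun π _ => Fmap π) ?_ ?_ ?_ ?_).symm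
  · intro π _
    exact Finset.mem_filter.mpr ⟨(Fmap_mem π).1, (Fmap_mem π).2⟩
  · intro a _ b _ h
    exact Fmap_inj h
  · intro σ hσ
    obtain ⟨hm, hx⟩ := Finset.mem_filter.mp hσ
    obtain ⟨π, hπ⟩ := Fmap_surj σ hm hx
    exact ⟨π, Finset.mem_univ _, hπ⟩
  · intro π _
    exact Fmap_value π

end PfCb

/-- The Pfaffian of the `2μ × 2μ` checkerboard matrix equals `2^(μ−1)` for every `μ ≥ 1`. -/
theorem pfaffian_checkerboard (μ : ℕ) (hμ : 1 ≤ μ) :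
    pfaffian (checkerboard μ) = 2 ^ (μ - 1) := by
  rw [PfCb.pf_eq_det, PfCb.Bmat_det hμ]
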